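/- For q even, every (q+1)-arc of PG(2,q) is contained in a (q+2)-arc of PG(2,q). -/

import Mathlib

open Finset Matrix Projectivization
open scoped LinearAlgebra.Projectivization

variable {F : Type} [Field F]

noncomputable instance [Fintype F] : Fintype (ℙ F (Fin 3 → F)) := @Fintype.ofFinite _ (inferInstanceAs (Finite (Quotient _)))

example [Fintype F] : True := trivial

-- test basic bridging lemma: nonzero member of submodule
lemma mk_eq_of_mem {v : Fin 3 → F} (hv : v ≠ 0) {p : ℙ F (Fin 3 → F)}
    (h : v ∈ p.submodule) : Projectivization.mk F v hv = p := by
  induction' p with u hu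
  rw [submodule_mk, Submodule.mem_span_singleton] at h
  obtain ⟨a, rfl⟩ := h
  have ha : a ≠ 0 := by rintro rfl; simp at hv
  rw [mk_eq_mk_iff]
  exact ⟨Units.mk0 a ha, rfl⟩

/-- dot product with fixed `w` as linear map -/
def dotLin (w : Fin 3 → F) : (Fin 3 → F) →ₗ[F] F where
  toFun v := dotProduct v w
  map_add' a b := add_dotProduct a b w
  map_smul' c a := smul_dotProduct c a w

lemma finrank_ker_dotLin {w : Fin 3 → F} (hw : w ≠ 0) :
    Module.finrank F (LinearMap.ker (dotLin w)) = 2 := by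
  have hr : LinearMap.range (dotLin w) = ⊤ := by
    obtain ⟨u, hu⟩ : ∃ u, dotProduct u w ≠ 0 := by
      by_contra h
      push_neg at h
      exact hw (by rwa [← dotProduct_eq_zero_iff (v := w), forall_congr' (fun u => by rw [dotProduct_comm])])
    refine LinearMap.range_eq_top.mpr fun c => ⟨(c * (dotProduct u w)⁻¹) • u, ?_⟩
    simp only [dotLin, LinearMap.coe_mk, AddHom.coe_mk, smul_dotProduct, smul_eq_mul, mul_assoc,
      inv_mul_cancel₀ hu, mul_one]
  have := LinearMap.finrank_range_add_finrank_ker (dotLin w)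
  rw [hr, finrank_top, Module.finrank_self, Module.finrank_fin_fun] at this
  omega

lemma dot_rep_eq_zero_iff {p ℓ : ℙ F (Fin 3 → F)} :
    p.orthogonal ℓ ↔ dotProduct p.rep ℓ.rep = 0 := by
  conv_lhs => rw [← p.mk_rep, ← ℓ.mk_rep]
  exact orthogonal_mk p.rep_nonzero ℓ.rep_nonzero

lemma submodule_le_ker {p ℓ : ℙ F (Fin 3 → F)} (h : p.orthogonal ℓ) :
    p.submodule ≤ LinearMap.ker (dotLin ℓ.rep) := by
  rw [submodule_eq, Submodule.span_singleton_le_iff_mem, LinearMap.mem_ker]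
  exact dot_rep_eq_zero_iff.mp h

/-- collinearity from a common line -/
lemma collinear_of_orthogonal {p₁ p₂ p₃ ℓ : ℙ F (Fin 3 → F)} (h₁ : p₁.orthogonal ℓ)
    (h₂ : p₂.orthogonal ℓ) (h₃ : p₃.orthogonal ℓ) :
    Module.finrank F ↥(p₁.submodule ⊔ p₂.submodule ⊔ p₃.submodule) ≤ 2 := by
  have hle : p₁.submodule ⊔ p₂.submodule ⊔ p₃.submodule ≤ LinearMap.ker (dotLin ℓ.rep) :=
    sup_le (sup_le (submodule_le_ker h₁) (submodule_le_ker h₂)) (submodule_le_ker h₃)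
  calc Module.finrank F ↥(p₁.submodule ⊔ p₂.submodule ⊔ p₃.submodule)
      ≤ Module.finrank F ↥(LinearMap.ker (dotLin ℓ.rep)) := Submodule.finrank_mono hle
    _ = 2 := finrank_ker_dotLin ℓ.rep_nonzero

/-- from collinearity to a common line -/
lemma orthogonal_cross_of_collinear [DecidableEq F] {p₁ p₂ p₃ : ℙ F (Fin 3 → F)} (h12 : p₁ ≠ p₂)
    (h : Module.finrank F ↥(p₁.submodule ⊔ p₂.submodule ⊔ p₃.submodule) ≤ 2) :
    p₃.orthogonal (Projectivization.cross p₁ p₂) := by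
  induction' p₁ with v₁ h₁
  induction' p₂ with v₂ h₂
  induction' p₃ with v₃ h₃
  have hc : crossProduct v₁ v₂ ≠ 0 := mt (mk_eq_mk_iff_crossProduct_eq_zero h₁ h₂).mpr h12
  rw [cross_mk_of_ne h₁ h₂ h12, orthogonal_mk]
  have hli : LinearIndependent F ![v₁, v₂] := crossProduct_ne_zero_iff_linearIndependent.mp hc
  have hsup : (Projectivization.mk F v₁ h₁).submodule ⊔ (Projectivization.mk F v₂ h₂).submodule
      = Submodule.span F {v₁, v₂} := by
    rw [submodule_mk, submodule_mk, ← Submodule.span_union, Set.singleton_union]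
  have hfr2 : Module.finrank F ↥(Submodule.span F {v₁, v₂}) = 2 := by
    have hr : Set.range ![v₁, v₂] = {v₁, v₂} := by
      ext x
      simp [Fin.exists_fin_two, or_comm]
    have := finrank_span_eq_card (R := F) hli
    rwa [hr, Fintype.card_fin] at this
  have hv3 : v₃ ∈ Submodule.span F {v₁, v₂} := by
    have hle : Submodule.span F {v₁, v₂} ≤ (Projectivization.mk F v₁ h₁).submodule
        ⊔ (Projectivization.mk F v₂ h₂).submodule ⊔ (Projectivization.mk F v₃ h₃).submodule := by
      rw [hsup]; exact le_sup_left
    have heq : Submodule.span F {v₁, v₂} = (Projectivization.mk F v₁ h₁).submodule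
        ⊔ (Projectivization.mk F v₂ h₂).submodule ⊔ (Projectivization.mk F v₃ h₃).submodule := by
      apply Submodule.eq_of_le_of_finrank_le hle
      rw [hfr2]; exact h
    rw [heq]
    apply Submodule.mem_sup_right
    rw [submodule_mk]
    exact Submodule.mem_span_singleton_self v₃
  obtain ⟨a, b, hab⟩ := Submodule.mem_span_pair.mp hv3
  rw [← hab]
  rw [add_dotProduct, smul_dotProduct, smul_dotProduct, dot_self_cross, dot_cross_self]
  simp

section Counting
variable [Fintype F]

open scoped Classical in
lemma card_nonzero_submodule (W : Submodule F (Fin 3 → F)) :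
    ((univ : Finset (Fin 3 → F)).filter fun v => v ∈ W ∧ v ≠ 0).card
      = Fintype.card F ^ (Module.finrank F W) - 1 := by
  have h0 : ((univ : Finset (Fin 3 → F)).filter fun v => v ∈ W ∧ v ≠ 0)
      = ((univ : Finset (Fin 3 → F)).filter fun v => v ∈ W).erase 0 := by
    ext v
    simp [and_comm, eq_comm (a := v)]
  rw [h0, card_erase_of_mem (by simp [W.zero_mem]), ← Fintype.card_subtype]
  congr 1
  exact (Module.card_eq_pow_finrank (K := F) (V := ↥W)).symm ▸ rfl

open scoped Classical in
lemma card_ptsOn (ℓ : ℙ F (Fin 3 → F)) :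
    ((univ : Finset (ℙ F (Fin 3 → F))).filter fun p => p.orthogonal ℓ).card
      = Fintype.card F + 1 := by
  set q := Fintype.card F with hq
  set S : Finset (Fin 3 → F) :=
    univ.filter (fun v => v ∈ LinearMap.ker (dotLin ℓ.rep) ∧ v ≠ 0) with hS
  set T : Finset (ℙ F (Fin 3 → F)) := univ.filter (fun p => p.orthogonal ℓ) with hT
  have hST : S.card = ∑ p ∈ T, (S.filter fun v => (if h : v = 0 then ℓ else
      Projectivization.mk F v h) = p).card := by
    apply card_eq_sum_card_fiberwise
    intro v hv
    simp only [Finset.mem_coe, hS, mem_filter, LinearMap.mem_ker] at hv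
    obtain ⟨-, hdot, hv0⟩ := hv
    beta_reduce
    rw [dif_neg hv0]
    simp only [Finset.mem_coe, hT, mem_filter, mem_univ, true_and]
    rw [← ℓ.mk_rep, orthogonal_mk]
    exact hdot
  have hfiber : ∀ p ∈ T, (S.filter fun v => (if h : v = 0 then ℓ else
      Projectivization.mk F v h) = p).card = q - 1 := by
    intro p hp
    simp only [hT, mem_filter, mem_univ, true_and] at hp
    have : (S.filter fun v => (if h : v = 0 then ℓ else Projectivization.mk F v h) = p)
        = (univ.filter fun v => v ∈ p.submodule ∧ v ≠ 0) := by
      ext v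
      simp only [hS, mem_filter, mem_univ, true_and, LinearMap.mem_ker]
      constructor
      · rintro ⟨⟨hker, hv0⟩, hmk⟩
        rw [dif_neg hv0] at hmk
        refine ⟨?_, hv0⟩
        rw [← hmk, submodule_mk]
        exact Submodule.mem_span_singleton_self v
      · rintro ⟨hmem, hv0⟩
        exact ⟨⟨submodule_le_ker hp hmem, hv0⟩, by rw [dif_neg hv0]; exact mk_eq_of_mem hv0 hmem⟩
    rw [this, card_nonzero_submodule, p.finrank_submodule, pow_one]
  have hS2 : S.card = q ^ 2 - 1 := by
    rw [hS]
    have := card_nonzero_submodule (LinearMap.ker (dotLin ℓ.rep))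
    rwa [finrank_ker_dotLin ℓ.rep_nonzero] at this
  rw [Finset.sum_congr rfl hfiber, Finset.sum_const, smul_eq_mul] at hST
  have hq2 : 2 ≤ q := Fintype.one_lt_card
  have key : T.card * (q - 1) = (q + 1) * (q - 1) := by
    rw [← hST, hS2]
    clear_value q
    obtain ⟨n, rfl⟩ : ∃ n, q = n + 2 := ⟨q - 2, by omega⟩
    have h4 : (n + 2) ^ 2 = n * n + 4 * n + 4 := by ring
    have h5 : (n + 2 + 1) * (n + 2 - 1) = n * n + 4 * n + 3 := by
      have : n + 2 - 1 = n + 1 := by omega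
      rw [this]; ring
    omega
  exact Nat.eq_of_mul_eq_mul_right (by omega) key

end Counting

open scoped Classical in
lemma double_count {α β : Type*} (A : Finset α) (B : Finset β) (r : α → β → Prop) :
    ∑ a ∈ A, (B.filter (fun b => r a b)).card = ∑ b ∈ B, (A.filter (fun a => r a b)).card := by
  simp only [card_filter]
  rw [Finset.sum_comm]

open scoped Classical in
lemma sum_fibers [Fintype F] (x : ℙ F (Fin 3 → F)) (S : Finset (ℙ F (Fin 3 → F))) (hx : x ∉ S) :
    ∑ ℓ ∈ univ.filter (fun ℓ => x.orthogonal ℓ),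
      (S.filter (fun p => p.orthogonal ℓ)).card = S.card := by
  classical
  symm
  rw [card_eq_sum_card_fiberwise (f := fun e => Projectivization.cross x e)
    (t := univ.filter (fun ℓ => x.orthogonal ℓ))
    (fun e he => by
      simp only [Finset.mem_coe, mem_filter, mem_univ, true_and] at he ⊢
      exact orthogonal_cross_left (fun h => hx (h ▸ he)))]
  apply sum_congr rfl
  intro ℓ hℓ
  simp only [mem_filter, mem_univ, true_and] at hℓ
  apply congrArg
  apply filter_congr
  intro e he
  have hxe : x ≠ e := fun h => hx (h ▸ he)
  constructor
  · rintro rfl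
    exact orthogonal_cross_right hxe
  · intro h
    exact ((Configuration.ofField.eq_or_eq_of_orthogonal hℓ h (orthogonal_cross_left hxe)
      (orthogonal_cross_right hxe)).resolve_left hxe).symm

open scoped Classical in
lemma card_linesThrough [Fintype F] (x : ℙ F (Fin 3 → F)) :
    ((univ : Finset (ℙ F (Fin 3 → F))).filter fun ℓ => x.orthogonal ℓ).card
      = Fintype.card F + 1 := by
  rw [← card_ptsOn x]
  congr 1
  apply filter_congr
  intro ℓ _
  exact orthogonal_comm

/-- A `k`-arc in `PG(2,q)`: a set of `k ≥ 3` points (1-dimensional subspaces of `F³`),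
no three of which are collinear, where three points are collinear if their
representative vectors span a subspace of dimension at most 2. -/
def IsArc (F : Type) [Field F] (K : Finset (Projectivization F (Fin 3 → F))) : Prop :=
  3 ≤ K.card ∧
    ∀ p₁ ∈ K, ∀ p₂ ∈ K, ∀ p₃ ∈ K, p₁ ≠ p₂ → p₁ ≠ p₃ → p₂ ≠ p₃ →
      ¬ (Module.finrank F ↥(p₁.submodule ⊔ p₂.submodule ⊔ p₃.submodule) ≤ 2)

open scoped Classical in
lemma sec_le_two {K : Finset (ℙ F (Fin 3 → F))} (hK : IsArc F K) (ℓ : ℙ F (Fin 3 → F)) :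
    (K.filter (fun p => p.orthogonal ℓ)).card ≤ 2 := by
  by_contra h
  push_neg at h
  obtain ⟨a, b, c, ha, hb, hc, hab, hac, hbc⟩ := two_lt_card_iff.mp h
  simp only [mem_filter] at ha hb hc
  exact hK.2 a ha.1 b hb.1 c hc.1 hab hac hbc
    (collinear_of_orthogonal ha.2 hb.2 hc.2)

open scoped Classical in
/-- each point of the arc lies on exactly one tangent line -/
lemma tangent_count [Fintype F] {K : Finset (ℙ F (Fin 3 → F))} (hK : IsArc F K)
    (hcard : K.card = Fintype.card F + 1) {e : ℙ F (Fin 3 → F)} (he : e ∈ K) :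
    ((univ.filter fun ℓ => e.orthogonal ℓ).filter
      (fun ℓ => (K.filter (fun p => p.orthogonal ℓ)).card = 1)).card = 1 := by
  set q := Fintype.card F with hq
  set L := univ.filter fun ℓ => e.orthogonal ℓ with hL
  have hsum : ∑ ℓ ∈ L, ((K.erase e).filter (fun p => p.orthogonal ℓ)).card = q :=
    (sum_fibers e (K.erase e) (notMem_erase e K)).trans (by rw [card_erase_of_mem he, hcard]; omega)
  have hterm : ∀ ℓ ∈ L, ((K.erase e).filter (fun p => p.orthogonal ℓ)).card
      = (K.filter (fun p => p.orthogonal ℓ)).card - 1 := by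
    intro ℓ hℓ
    simp only [hL, mem_filter, mem_univ, true_and] at hℓ
    rw [filter_erase, card_erase_of_mem (by simp [he, hℓ])]
  have hmem : ∀ ℓ ∈ L, (K.filter (fun p => p.orthogonal ℓ)).card = 1
      ∨ (K.filter (fun p => p.orthogonal ℓ)).card = 2 := by
    intro ℓ hℓ
    simp only [hL, mem_filter, mem_univ, true_and] at hℓ
    have h1 : 1 ≤ (K.filter (fun p => p.orthogonal ℓ)).card :=
      card_pos.mpr ⟨e, by simp [he, hℓ]⟩
    have h2 := sec_le_two hK ℓ
    omega
  have hsplit := card_filter_add_card_filter_not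
    (s := L) (p := fun ℓ => (K.filter (fun p => p.orthogonal ℓ)).card = 1)
  have hLcard : L.card = q + 1 := card_linesThrough e
  -- the complement inside L consists of lines with 2 points of K, and sums to q
  have hsum2 : ∑ ℓ ∈ L, ((K.filter (fun p => p.orthogonal ℓ)).card - 1) = q := by
    rw [← hsum]; exact sum_congr rfl (fun ℓ hℓ => (hterm ℓ hℓ).symm)
  have hsum3 : ∑ ℓ ∈ L, ((K.filter (fun p => p.orthogonal ℓ)).card - 1)
      = (L.filter (fun ℓ => ¬ (K.filter (fun p => p.orthogonal ℓ)).card = 1)).card := by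
    rw [card_filter]
    apply sum_congr rfl
    intro ℓ hℓ
    rcases hmem ℓ hℓ with h | h <;> simp [h]
  omega

open scoped Classical in
lemma tangent_parity [Fintype F] {K : Finset (ℙ F (Fin 3 → F))} (hK : IsArc F K)
    (hcard : K.card = Fintype.card F + 1) {x : ℙ F (Fin 3 → F)} (hx : x ∉ K) :
    ((univ.filter fun ℓ => x.orthogonal ℓ).filter
      (fun ℓ => (K.filter (fun p => p.orthogonal ℓ)).card = 1)).card % 2
      = (Fintype.card F + 1) % 2 := by
  set L := univ.filter fun ℓ => x.orthogonal ℓ with hL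
  have hsum : ∑ ℓ ∈ L, (K.filter (fun p => p.orthogonal ℓ)).card = Fintype.card F + 1 :=
    (sum_fibers x K hx).trans hcard
  have hpt : ∀ ℓ ∈ L, (K.filter (fun p => p.orthogonal ℓ)).card % 2
      = if (K.filter (fun p => p.orthogonal ℓ)).card = 1 then 1 else 0 := by
    intro ℓ _
    have := sec_le_two hK ℓ
    by_cases h : (K.filter (fun p => p.orthogonal ℓ)).card = 1 <;> simp [h] <;> omega
  calc (L.filter (fun ℓ => (K.filter (fun p => p.orthogonal ℓ)).card = 1)).card % 2
      = (∑ ℓ ∈ L, if (K.filter (fun p => p.orthogonal ℓ)).card = 1 then 1 else 0) % 2 := by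
        rw [card_filter]
    _ = (∑ ℓ ∈ L, (K.filter (fun p => p.orthogonal ℓ)).card % 2) % 2 := by
        rw [Finset.sum_congr rfl hpt]
    _ = (∑ ℓ ∈ L, (K.filter (fun p => p.orthogonal ℓ)).card) % 2 := by
        rw [← Finset.sum_nat_mod]
    _ = (Fintype.card F + 1) % 2 := by rw [hsum]

lemma all_one {α : Type*} {s : Finset α} {f : α → ℕ} (h1 : ∀ a ∈ s, 1 ≤ f a)
    (h : ∑ a ∈ s, f a = s.card) : ∀ a ∈ s, f a = 1 := by
  by_contra hcon
  push_neg at hcon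
  obtain ⟨a, ha, hne⟩ := hcon
  have hlt : ∑ _ ∈ s, 1 < ∑ a ∈ s, f a := by
    apply Finset.sum_lt_sum h1 ⟨a, ha, ?_⟩
    have := h1 a ha
    omega
  rw [Finset.sum_const, smul_eq_mul, mul_one, h] at hlt
  omega

/-- For `q` even, every `(q+1)`-arc of `PG(2,q)` is contained in a `(q+2)`-arc. -/
theorem arc_extends_of_even (q : ℕ) (F : Type) [Field F] [Fintype F]
    (hq : Fintype.card F = q) (heven : Even q)
    (K : Finset (Projectivization F (Fin 3 → F)))
    (hK : IsArc F K) (hcard : K.card = q + 1) :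
    ∃ K' : Finset (Projectivization F (Fin 3 → F)),
      K ⊆ K' ∧ IsArc F K' ∧ K'.card = q + 2 := by
  classical
  subst hq
  set q := Fintype.card F with hq
  have hq2 : 2 ≤ q := Fintype.one_lt_card
  set T : Finset (ℙ F (Fin 3 → F)) :=
    univ.filter (fun ℓ => (K.filter (fun p => p.orthogonal ℓ)).card = 1) with hT
  -- a helper for singletons
  have single : ∀ (s : Finset (ℙ F (Fin 3 → F))) (a : ℙ F (Fin 3 → F)),
      s.card = 1 → a ∈ s → s = {a} := by
    intro s a hs ha
    obtain ⟨z, rfl⟩ := card_eq_one.mp hs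
    rw [mem_singleton] at ha
    rw [ha]
  -- tangent sets at points of K
  have htc : ∀ e ∈ K, (T.filter (fun ℓ => e.orthogonal ℓ)).card = 1 := by
    intro e he
    have h := tangent_count hK hcard he
    rw [← h]
    congr 1
    ext ℓ
    simp only [hT, mem_filter, mem_univ, true_and]
    tauto
  -- total number of tangent lines
  have hTcard : T.card = q + 1 := by
    have hdc := double_count K T (fun e ℓ => e.orthogonal ℓ)
    rw [Finset.sum_congr rfl htc, Finset.sum_const, smul_eq_mul, mul_one, hcard] at hdc
    have : ∀ ℓ ∈ T, (K.filter (fun e => e.orthogonal ℓ)).card = 1 := by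
      intro ℓ hℓ
      simp only [hT, mem_filter, mem_univ, true_and] at hℓ
      exact hℓ
    rw [Finset.sum_congr rfl this, Finset.sum_const, smul_eq_mul, mul_one] at hdc
    omega
  -- two points of K and their tangents
  obtain ⟨a, b, ha, hb, hab⟩ := one_lt_card_iff.mp (by omega : 1 < K.card)
  obtain ⟨ℓa, haT, haa⟩ : ∃ ℓ, ℓ ∈ T ∧ a.orthogonal ℓ := by
    have h := htc a ha
    obtain ⟨ℓ, hℓ⟩ := card_eq_one.mp h
    have : ℓ ∈ T.filter (fun ℓ => a.orthogonal ℓ) := hℓ ▸ mem_singleton_self ℓ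
    exact ⟨ℓ, (mem_filter.mp this).1, (mem_filter.mp this).2⟩
  obtain ⟨ℓb, hbT, hbb⟩ : ∃ ℓ, ℓ ∈ T ∧ b.orthogonal ℓ := by
    have h := htc b hb
    obtain ⟨ℓ, hℓ⟩ := card_eq_one.mp h
    have : ℓ ∈ T.filter (fun ℓ => b.orthogonal ℓ) := hℓ ▸ mem_singleton_self ℓ
    exact ⟨ℓ, (mem_filter.mp this).1, (mem_filter.mp this).2⟩
  have hsecT : ∀ ℓ ∈ T, (K.filter (fun p => p.orthogonal ℓ)).card = 1 := by
    intro ℓ hℓ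
    simp only [hT, mem_filter, mem_univ, true_and] at hℓ
    exact hℓ
  have hseca : K.filter (fun p => p.orthogonal ℓa) = {a} :=
    single _ a (hsecT ℓa haT) (mem_filter.mpr ⟨ha, haa⟩)
  have hsecb : K.filter (fun p => p.orthogonal ℓb) = {b} :=
    single _ b (hsecT ℓb hbT) (mem_filter.mpr ⟨hb, hbb⟩)
  have hℓab : ℓa ≠ ℓb := by
    intro h
    have : b ∈ K.filter (fun p => p.orthogonal ℓa) := mem_filter.mpr ⟨hb, h ▸ hbb⟩
    rw [hseca, mem_singleton] at this
    exact hab this.symm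
  set N : ℙ F (Fin 3 → F) := Projectivization.cross ℓa ℓb with hN
  have hNa : N.orthogonal ℓa := cross_orthogonal_left hℓab
  have hNb : N.orthogonal ℓb := cross_orthogonal_right hℓab
  have hNK : N ∉ K := by
    intro h
    have h1 : N ∈ K.filter (fun p => p.orthogonal ℓa) := mem_filter.mpr ⟨h, hNa⟩
    have h2 : N ∈ K.filter (fun p => p.orthogonal ℓb) := mem_filter.mpr ⟨h, hNb⟩
    rw [hseca, mem_singleton] at h1
    rw [hsecb, mem_singleton] at h2
    exact hab (h1 ▸ h2 ▸ rfl)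
  -- the key claim: no line through N meets K twice
  have key : ∀ (m c d : ℙ F (Fin 3 → F)), c ∈ K → d ∈ K → c ≠ d →
      c.orthogonal m → d.orthogonal m → N.orthogonal m → False := by
    intro m c d hc hd hcd hcm hdm hNm
    have hcdK : ({c, d} : Finset (ℙ F (Fin 3 → F))) ⊆ K.filter (fun p => p.orthogonal m) := by
      intro x hx
      rcases mem_insert.mp hx with rfl | hx
      · exact mem_filter.mpr ⟨hc, hcm⟩
      · rw [mem_singleton] at hx
        subst hx
        exact mem_filter.mpr ⟨hd, hdm⟩
    have hsecm : K.filter (fun p => p.orthogonal m) = {c, d} :=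
      (Finset.eq_of_subset_of_card_le hcdK
        (by rw [card_pair hcd]; exact sec_le_two hK m)).symm
    set X : Finset (ℙ F (Fin 3 → F)) :=
      (univ.filter (fun p => p.orthogonal m)) \ {c, d} with hX
    have hcdpts : ({c, d} : Finset (ℙ F (Fin 3 → F))) ⊆ univ.filter (fun p => p.orthogonal m) := by
      intro x hx
      rcases mem_insert.mp hx with rfl | hx
      · exact mem_filter.mpr ⟨mem_univ _, hcm⟩
      · rw [mem_singleton] at hx
        subst hx
        exact mem_filter.mpr ⟨mem_univ _, hdm⟩
    have hXcard : X.card = q - 1 := by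
      rw [hX, card_sdiff_of_subset hcdpts, card_ptsOn, card_pair hcd]
      omega
    have hXK : ∀ x ∈ X, x ∉ K := by
      intro x hx hxK
      rw [hX, mem_sdiff, mem_filter] at hx
      exact hx.2 (hsecm ▸ mem_filter.mpr ⟨hxK, hx.1.2⟩)
    have hNX : N ∈ X := by
      rw [hX, mem_sdiff, mem_filter]
      refine ⟨⟨mem_univ _, hNm⟩, fun h => ?_⟩
      rcases mem_insert.mp h with rfl | h
      · exact hNK hc
      · rw [mem_singleton] at h
        exact hNK (h ▸ hd)
    -- tangent count through each x ∈ X, rewritten through T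
    have ht_eq : ∀ x : ℙ F (Fin 3 → F),
        ((univ.filter fun ℓ => x.orthogonal ℓ).filter
          (fun ℓ => (K.filter (fun p => p.orthogonal ℓ)).card = 1)).card
        = (T.filter (fun ℓ => x.orthogonal ℓ)).card := by
      intro x
      congr 1
      ext ℓ
      simp only [hT, mem_filter, mem_univ, true_and]
      tauto
    have hodd : ∀ x ∈ X, (T.filter (fun ℓ => x.orthogonal ℓ)).card % 2 = 1 := by
      intro x hx
      have := tangent_parity hK hcard (hXK x hx)
      rw [ht_eq x] at this
      obtain ⟨r, hr⟩ := heven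
      omega
    -- per-tangent intersection with X
    have hperT : ∀ ℓ ∈ T, (X.filter (fun x => x.orthogonal ℓ)).card
        = if c.orthogonal ℓ ∨ d.orthogonal ℓ then 0 else 1 := by
      intro ℓ hℓ
      have hsec1 := hsecT ℓ hℓ
      have hℓm : ℓ ≠ m := by
        intro h
        rw [h, hsecm, card_pair hcd] at hsec1
        omega
      by_cases hcase : c.orthogonal ℓ ∨ d.orthogonal ℓ
      · rw [if_pos hcase]
        rw [Finset.card_eq_zero, Finset.eq_empty_iff_forall_notMem]
        intro x hx
        rw [mem_filter, hX, mem_sdiff, mem_filter] at hx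
        obtain ⟨⟨⟨-, hxm⟩, hxcd⟩, hxℓ⟩ := hx
        obtain ⟨e, hem, heℓ, hecd⟩ : ∃ e, e.orthogonal m ∧ e.orthogonal ℓ ∧
            e ∈ ({c, d} : Finset (ℙ F (Fin 3 → F))) := by
          rcases hcase with h | h
          · exact ⟨c, hcm, h, mem_insert_self _ _⟩
          · exact ⟨d, hdm, h, mem_insert.mpr (Or.inr (mem_singleton_self d))⟩
        rcases Configuration.ofField.eq_or_eq_of_orthogonal hxm hem hxℓ heℓ with h | h
        · exact hxcd (h ▸ hecd)
        · exact hℓm h.symm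
      · rw [if_neg hcase]
        push_neg at hcase
        set y : ℙ F (Fin 3 → F) := Projectivization.cross m ℓ with hy
        have hym : y.orthogonal m := cross_orthogonal_left (Ne.symm hℓm)
        have hyℓ : y.orthogonal ℓ := cross_orthogonal_right (Ne.symm hℓm)
        have hycd : y ∉ ({c, d} : Finset (ℙ F (Fin 3 → F))) := by
          intro h
          rcases mem_insert.mp h with rfl | h
          · exact hcase.1 hyℓ
          · rw [mem_singleton] at h
            exact hcase.2 (h ▸ hyℓ)
        rw [Finset.card_eq_one]
        refine ⟨y, ?_⟩
        ext x
        rw [mem_filter, hX, mem_sdiff, mem_filter, mem_singleton]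
        constructor
        · rintro ⟨⟨⟨-, hxm⟩, -⟩, hxℓ⟩
          exact (Configuration.ofField.eq_or_eq_of_orthogonal hxm hym hxℓ hyℓ).resolve_right
            (fun h => hℓm h.symm)
        · rintro rfl
          exact ⟨⟨⟨mem_univ _, hym⟩, hycd⟩, hyℓ⟩
    -- sum over X of tangent counts equals q - 1
    have hsumX : ∑ x ∈ X, (T.filter (fun ℓ => x.orthogonal ℓ)).card = q - 1 := by
      rw [double_count X T (fun x ℓ => x.orthogonal ℓ)]
      rw [Finset.sum_congr rfl hperT]
      have hTc : T.filter (fun ℓ => c.orthogonal ℓ ∨ d.orthogonal ℓ)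
          = T.filter (fun ℓ => c.orthogonal ℓ) ∪ T.filter (fun ℓ => d.orthogonal ℓ) := by
        rw [← filter_or]
      have hdisj : Disjoint (T.filter (fun ℓ => c.orthogonal ℓ))
          (T.filter (fun ℓ => d.orthogonal ℓ)) := by
        rw [Finset.disjoint_left]
        intro ℓ h1 h2
        rw [mem_filter] at h1 h2
        have : ({c, d} : Finset (ℙ F (Fin 3 → F))) ⊆ K.filter (fun p => p.orthogonal ℓ) := by
          intro x hx
          rcases mem_insert.mp hx with rfl | hx
          · exact mem_filter.mpr ⟨hc, h1.2⟩
          · rw [mem_singleton] at hx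
            subst hx
            exact mem_filter.mpr ⟨hd, h2.2⟩
        have := card_le_card this
        rw [card_pair hcd, hsecT ℓ h1.1] at this
        omega
      have hsplit := card_filter_add_card_filter_not
        (s := T) (p := fun ℓ => c.orthogonal ℓ ∨ d.orthogonal ℓ)
      rw [hTc, card_union_of_disjoint hdisj, htc c hc, htc d hd] at hsplit
      calc ∑ ℓ ∈ T, (if c.orthogonal ℓ ∨ d.orthogonal ℓ then 0 else 1)
          = ∑ ℓ ∈ T, (if ¬(c.orthogonal ℓ ∨ d.orthogonal ℓ) then 1 else 0) := by
            apply Finset.sum_congr rfl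
            intro ℓ _
            by_cases h : c.orthogonal ℓ ∨ d.orthogonal ℓ <;> simp [h]
        _ = (T.filter (fun ℓ => ¬(c.orthogonal ℓ ∨ d.orthogonal ℓ))).card := by
            rw [card_filter]
        _ = q - 1 := by omega
    -- each point of X is on exactly one tangent; but N is on two
    have hone : ∀ x ∈ X, (T.filter (fun ℓ => x.orthogonal ℓ)).card = 1 := by
      apply all_one
      · intro x hx
        have := hodd x hx
        omega
      · rw [hsumX, hXcard]
    have hNone := hone N hNX
    have h2 : ({ℓa, ℓb} : Finset (ℙ F (Fin 3 → F))) ⊆ T.filter (fun ℓ => N.orthogonal ℓ) := by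
      intro x hx
      rcases mem_insert.mp hx with rfl | hx
      · exact mem_filter.mpr ⟨haT, hNa⟩
      · rw [mem_singleton] at hx
        subst hx
        exact mem_filter.mpr ⟨hbT, hNb⟩
    have := card_le_card h2
    rw [card_pair hℓab, hNone] at this
    omega
  -- build the extended arc
  refine ⟨insert N K, subset_insert N K, ⟨?_, ?_⟩, ?_⟩
  · rw [card_insert_of_notMem hNK, hcard]
    omega
  · intro p₁ h₁ p₂ h₂ p₃ h₃ h12 h13 h23 hrank
    have h1m : p₁.orthogonal (Projectivization.cross p₁ p₂) := orthogonal_cross_left h12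
    have h2m : p₂.orthogonal (Projectivization.cross p₁ p₂) := orthogonal_cross_right h12
    have h3m : p₃.orthogonal (Projectivization.cross p₁ p₂) :=
      orthogonal_cross_of_collinear h12 hrank
    rcases mem_insert.mp h₁ with rfl | h₁K
    · rcases mem_insert.mp h₂ with rfl | h₂K
      · exact h12 rfl
      · rcases mem_insert.mp h₃ with rfl | h₃K
        · exact h13 rfl
        · exact key _ p₂ p₃ h₂K h₃K h23 h2m h3m h1m
    · rcases mem_insert.mp h₂ with rfl | h₂K
      · rcases mem_insert.mp h₃ with rfl | h₃K
        · exact h23 rfl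
        · exact key _ p₁ p₃ h₁K h₃K h13 h1m h3m h2m
      · rcases mem_insert.mp h₃ with rfl | h₃K
        · exact key _ p₁ p₂ h₁K h₂K h12 h1m h2m h3m
        · exact hK.2 p₁ h₁K p₂ h₂K p₃ h₃K h12 h13 h23 hrank
  · rw [card_insert_of_notMem hNK, hcard]
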